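/- arXiv:2407.18954 — 10 statements merged into one kernel-verified Lean document; each statement's English description precedes it below -/
import Mathlib

section
/- Given a {1}-inverse G of A, a matrix X is a {1}-inverse of A if and only if X = G + (I − GA)V + W(I − AG) for some n×m matrices V, W. -/
open Matrix

/-- Column space (range) of a complex matrix. -/
noncomputable def mrange {m n : Type*} [Fintype n] (A : Matrix m n ℂ) : Submodule ℂ (m → ℂ) :=
  LinearMap.range A.mulVecLin

/-- The diamond partial order on rectangular complex matrices. -/
def diamondLE {m n : Type*} [Fintype m] [Fintype n] (A B : Matrix m n ℂ) : Prop :=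
  mrange A ≤ mrange B ∧ mrange Aᴴ ≤ mrange Bᴴ ∧ A * Bᴴ * A = A * Aᴴ * A

/-- `X` satisfies the four Penrose equations for `A`. -/
def IsMP {m n : Type*} [Fintype m] [Fintype n] (A : Matrix m n ℂ) (X : Matrix n m ℂ) : Prop :=
  A * X * A = A ∧ X * A * X = X ∧ (A * X)ᴴ = A * X ∧ (X * A)ᴴ = X * A

theorem stmt3 {m n : ℕ} (A : Matrix (Fin m) (Fin n) ℂ) (G : Matrix (Fin n) (Fin m) ℂ)
    (hG : A * G * A = A) (X : Matrix (Fin n) (Fin m) ℂ) :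
    A * X * A = A ↔ ∃ V W : Matrix (Fin n) (Fin m) ℂ,
      X = G + (1 - G * A) * V + W * (1 - A * G) := by
  constructor
  · intro hX
    refine ⟨X - G, G * A * (X - G), ?_⟩
    have h0 : A * (X - G) * A = 0 := by
      simp [Matrix.mul_sub, Matrix.sub_mul, hX, hG]
    have h1 : G * A * (X - G) * (A * G) = 0 := by
      have : G * A * (X - G) * (A * G) = G * (A * (X - G) * A) * G := by
        simp only [Matrix.mul_assoc]
      rw [this, h0]; simp
    have expand : G + (1 - G * A) * (X - G) + G * A * (X - G) * (1 - A * G)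
        = X - G * A * (X - G) * (A * G) := by
      simp only [Matrix.mul_sub, Matrix.sub_mul, Matrix.mul_one, Matrix.one_mul]
      abel
    rw [expand, h1, sub_zero]
  · rintro ⟨V, W, rfl⟩
    simp only [Matrix.mul_add, Matrix.add_mul, Matrix.mul_sub, Matrix.sub_mul,
      Matrix.mul_one, Matrix.one_mul, ← Matrix.mul_assoc, hG]
    rw [show A * W * A * G * A = A * W * (A * G * A) by simp [Matrix.mul_assoc], hG]
    abel
end

section
/- If A ≤⋄ B (diamond order), then A† = A† B A†, where A† is the Moore-Penrose inverse of A. -/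
open Matrix

theorem stmt4 {m n : ℕ} (A B : Matrix (Fin m) (Fin n) ℂ) (Ad : Matrix (Fin n) (Fin m) ℂ)
    (hAd : IsMP A Ad) (h : diamondLE A B) : Ad = Ad * B * Ad := by
  obtain ⟨h1, h2, h3, h4⟩ := hAd
  obtain ⟨-, -, h5⟩ := h
  -- Aᴴ B Aᴴ = Aᴴ A Aᴴ
  have h6 : Aᴴ * B * Aᴴ = Aᴴ * A * Aᴴ := by
    have := congrArg conjTranspose h5
    simpa [conjTranspose_mul, Matrix.mul_assoc] using this
  -- Ad = Ad Adᴴ Aᴴ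
  have hL : Ad = Ad * Adᴴ * Aᴴ := by
    calc Ad = Ad * (A * Ad) := by rw [← Matrix.mul_assoc, h2]
    _ = Ad * (A * Ad)ᴴ := by rw [h3]
    _ = Ad * Adᴴ * Aᴴ := by rw [conjTranspose_mul, Matrix.mul_assoc]
  -- Ad = Aᴴ Adᴴ Ad
  have hR : Ad = Aᴴ * Adᴴ * Ad := by
    calc Ad = (Ad * A) * Ad := h2.symm
    _ = (Ad * A)ᴴ * Ad := by rw [h4]
    _ = Aᴴ * Adᴴ * Ad := by rw [conjTranspose_mul]
  calc Ad = Ad * A * Ad := h2.symm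
  _ = (Ad * Adᴴ * Aᴴ) * A * (Aᴴ * Adᴴ * Ad) := by rw [← hL, ← hR]
  _ = Ad * Adᴴ * (Aᴴ * A * Aᴴ) * Adᴴ * Ad := by simp only [Matrix.mul_assoc]
  _ = Ad * Adᴴ * (Aᴴ * B * Aᴴ) * Adᴴ * Ad := by rw [h6]
  _ = (Ad * Adᴴ * Aᴴ) * B * (Aᴴ * Adᴴ * Ad) := by simp only [Matrix.mul_assoc]
  _ = Ad * B * Ad := by rw [← hL, ← hR]
end

section
/- For m×n complex matrices A and B, A ≤⋄ B holds if and only if A† = A† B A†, A = B B† A, and A = A B† B. -/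
open Matrix

lemma IsMP.conjT {m n : Type*} [Fintype m] [Fintype n] {A : Matrix m n ℂ} {X : Matrix n m ℂ}
    (h : IsMP A X) : IsMP Aᴴ Xᴴ := by
  obtain ⟨h1, h2, h3, h4⟩ := h
  refine ⟨?_, ?_, ?_, ?_⟩
  · calc Aᴴ * Xᴴ * Aᴴ = (A * X * A)ᴴ := by simp [conjTranspose_mul, Matrix.mul_assoc]
      _ = Aᴴ := by rw [h1]
  · calc Xᴴ * Aᴴ * Xᴴ = (X * A * X)ᴴ := by simp [conjTranspose_mul, Matrix.mul_assoc]
      _ = Xᴴ := by rw [h2]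
  · rw [← conjTranspose_mul, conjTranspose_conjTranspose, h4]
  · rw [← conjTranspose_mul, conjTranspose_conjTranspose, h3]

lemma ext_of_mulVec {m n : Type*} [Fintype n] [DecidableEq n] {A B : Matrix m n ℂ}
    (h : ∀ v, A *ᵥ v = B *ᵥ v) : A = B := by
  ext i j
  have := congrFun (h (Pi.single j 1)) i
  simpa using this

lemma range_le_iff {m n k : Type*} [Fintype m] [Fintype n] [Fintype k] [DecidableEq n]
    (A : Matrix m n ℂ) (B : Matrix m k ℂ) (Bd : Matrix k m ℂ) (hBd : IsMP B Bd) :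
    mrange A ≤ mrange B ↔ B * Bd * A = A := by
  constructor
  · intro h
    apply ext_of_mulVec
    intro v
    obtain ⟨w, hw⟩ := h ⟨v, rfl⟩
    simp only [mulVecLin_apply] at hw
    calc (B * Bd * A) *ᵥ v = (B * Bd) *ᵥ (A *ᵥ v) := by rw [← mulVec_mulVec]
      _ = (B * Bd) *ᵥ (B *ᵥ w) := by rw [hw]
      _ = (B * Bd * B) *ᵥ w := by simp [mulVec_mulVec, Matrix.mul_assoc]
      _ = B *ᵥ w := by rw [hBd.1]
      _ = A *ᵥ v := hw
  · intro h x hx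
    obtain ⟨v, hv⟩ := hx
    refine ⟨(Bd * A) *ᵥ v, ?_⟩
    simp only [mulVecLin_apply] at hv ⊢
    rw [mulVec_mulVec, ← Matrix.mul_assoc, h, hv]

lemma rangeH_le_iff {m n : Type*} [Fintype m] [Fintype n] [DecidableEq m]
    (A B : Matrix m n ℂ) (Bd : Matrix n m ℂ) (hBd : IsMP B Bd) :
    mrange Aᴴ ≤ mrange Bᴴ ↔ A * Bd * B = A := by
  rw [range_le_iff Aᴴ Bᴴ Bdᴴ hBd.conjT]
  constructor
  · intro h
    calc A * Bd * B = (Bᴴ * Bdᴴ * Aᴴ)ᴴ := by simp [conjTranspose_mul, Matrix.mul_assoc]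
      _ = A := by rw [h]; simp
  · intro h
    calc Bᴴ * Bdᴴ * Aᴴ = (A * Bd * B)ᴴ := by simp [conjTranspose_mul, Matrix.mul_assoc]
      _ = Aᴴ := by rw [h]

theorem stmt5 {m n : ℕ} (A B : Matrix (Fin m) (Fin n) ℂ) (Ad Bd : Matrix (Fin n) (Fin m) ℂ)
    (hAd : IsMP A Ad) (hBd : IsMP B Bd) :
    diamondLE A B ↔ (Ad = Ad * B * Ad ∧ A = B * Bd * A ∧ A = A * Bd * B) := by
  obtain ⟨hA1, hA2, hA3, hA4⟩ := hAd
  have k1 : Aᴴ * Adᴴ = Ad * A := by rw [← conjTranspose_mul, hA4]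
  have k2 : Adᴴ * Aᴴ = A * Ad := by rw [← conjTranspose_mul, hA3]
  have l1 : Ad * Adᴴ * Aᴴ = Ad := by rw [Matrix.mul_assoc, k2, ← Matrix.mul_assoc, hA2]
  have l2 : Aᴴ * Adᴴ * Ad = Ad := by rw [k1]; exact hA2
  have l3 : A * Aᴴ * Adᴴ = A := by rw [Matrix.mul_assoc, k1, ← Matrix.mul_assoc, hA1]
  have l4 : Adᴴ * Aᴴ * A = A := by rw [k2]; exact hA1
  constructor
  · rintro ⟨h1, h2, h3⟩
    refine ⟨?_, ((range_le_iff A B Bd hBd).1 h1).symm,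
      ((rangeH_le_iff A B Bd hBd).1 h2).symm⟩
    have h3' : Aᴴ * B * Aᴴ = Aᴴ * A * Aᴴ := by
      have := congrArg conjTranspose h3
      simp only [conjTranspose_mul, conjTranspose_conjTranspose, Matrix.mul_assoc] at this ⊢
      exact this
    calc Ad = Ad * A * Ad := hA2.symm
      _ = (Ad * Adᴴ * Aᴴ) * A * (Aᴴ * Adᴴ * Ad) := by rw [l1, l2]
      _ = Ad * Adᴴ * (Aᴴ * A * Aᴴ) * Adᴴ * Ad := by simp only [Matrix.mul_assoc]
      _ = Ad * Adᴴ * (Aᴴ * B * Aᴴ) * Adᴴ * Ad := by rw [h3']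
      _ = (Ad * Adᴴ * Aᴴ) * B * (Aᴴ * Adᴴ * Ad) := by simp only [Matrix.mul_assoc]
      _ = Ad * B * Ad := by rw [l1, l2]
  · rintro ⟨h1, h2, h3⟩
    refine ⟨(range_le_iff A B Bd hBd).2 h2.symm, (rangeH_le_iff A B Bd hBd).2 h3.symm, ?_⟩
    have hc : Adᴴ * Bᴴ * Adᴴ = Adᴴ := by
      have := congrArg conjTranspose h1
      simp only [conjTranspose_mul, conjTranspose_conjTranspose, Matrix.mul_assoc] at this ⊢
      exact this.symm
    calc A * Bᴴ * A = (A * Aᴴ * Adᴴ) * Bᴴ * (Adᴴ * Aᴴ * A) := by rw [l3, l4]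
      _ = A * Aᴴ * (Adᴴ * Bᴴ * Adᴴ) * Aᴴ * A := by simp only [Matrix.mul_assoc]
      _ = A * Aᴴ * Adᴴ * Aᴴ * A := by rw [hc]
      _ = (A * Aᴴ * Adᴴ) * (Aᴴ * A) := by simp only [Matrix.mul_assoc]
      _ = A * Aᴴ * A := by rw [l3, Matrix.mul_assoc]
end

section
/- If A ≤⋄ B, then A† A = A† A B† B A† A; that is, B† B is a {1}-inverse of the orthogonal projector A† A. -/
open Matrix

theorem stmt7 {m n : ℕ} (A B : Matrix (Fin m) (Fin n) ℂ) (Ad Bd : Matrix (Fin n) (Fin m) ℂ)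
    (hAd : IsMP A Ad) (hBd : IsMP B Bd) (h : diamondLE A B) :
    Ad * A = Ad * A * (Bd * B) * (Ad * A) := by
  obtain ⟨hA1, hA2, hA3, hA4⟩ := hAd
  obtain ⟨hB1, hB2, hB3, hB4⟩ := hBd
  obtain ⟨_, hr, _⟩ := h
  -- Bd * B * Bᴴ = Bᴴ
  have key : Bd * B * Bᴴ = Bᴴ := by
    calc Bd * B * Bᴴ = (Bd * B)ᴴ * Bᴴ := by rw [hB4]
    _ = (B * (Bd * B))ᴴ := by rw [conjTranspose_mul B (Bd * B)]
    _ = Bᴴ := by rw [← Matrix.mul_assoc, hB1]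
  -- Bd * B * Aᴴ = Aᴴ
  have hproj : Bd * B * Aᴴ = Aᴴ := by
    have hv : ∀ x : Fin m → ℂ, (Bd * B) *ᵥ (Aᴴ *ᵥ x) = Aᴴ *ᵥ x := by
      intro x
      have hx : (Aᴴ).mulVecLin x ∈ mrange Bᴴ := hr ⟨x, rfl⟩
      obtain ⟨y, hy⟩ := hx
      simp only [mulVecLin_apply] at hy
      rw [← hy, mulVec_mulVec, key]
    ext i j
    have := congrArg (fun v => v i) (hv (Pi.single j 1))
    simp only [mulVec_mulVec] at this
    simpa [mulVec_single] using this
  -- A * (Bd * B) = A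
  have hABB : A * (Bd * B) = A := by
    have := congrArg conjTranspose hproj
    rw [conjTranspose_mul, conjTranspose_conjTranspose, hB4] at this
    rw [← Matrix.mul_assoc] at this ⊢
    exact this
  calc Ad * A = Ad * (A * Ad * A) := by rw [hA1]
  _ = Ad * A * (Ad * A) := by simp only [Matrix.mul_assoc]
  _ = Ad * (A * (Bd * B)) * (Ad * A) := by rw [hABB]
  _ = Ad * A * (Bd * B) * (Ad * A) := by simp only [Matrix.mul_assoc]
end

section
/- If A ≤⋄ B, then A A† = A A† B B† A A†; that is, B B† is a {1}-inverse of the orthogonal projector A A†. -/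
open Matrix

theorem stmt8 {m n : ℕ} (A B : Matrix (Fin m) (Fin n) ℂ) (Ad Bd : Matrix (Fin n) (Fin m) ℂ)
    (hAd : IsMP A Ad) (hBd : IsMP B Bd) (h : diamondLE A B) :
    A * Ad = A * Ad * (B * Bd) * (A * Ad) := by
  have key : B * Bd * A = A := by
    ext i j
    have hx : A.mulVec (Pi.single j 1) ∈ mrange B := h.1 ⟨Pi.single j 1, rfl⟩
    obtain ⟨v, hv⟩ := hx
    simp only [mulVecLin_apply] at hv
    have hcol : (B * Bd * A).mulVec (Pi.single j 1) = A.mulVec (Pi.single j 1) := by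
      rw [← Matrix.mulVec_mulVec, ← hv, Matrix.mulVec_mulVec, hBd.1]
    have := congrFun hcol i
    simpa [Matrix.mulVec_single] using this
  have key2 : A * Ad * (B * Bd) * (A * Ad) = A * Ad * A * Ad := by
    rw [Matrix.mul_assoc (A * Ad) (B * Bd), ← Matrix.mul_assoc (B * Bd), key, ← Matrix.mul_assoc]
  rw [key2, hAd.1]
end

section
/- If A ≤⋄ B, then A A† = A B† B A† and A† A = A† B B† A. -/
open Matrix

theorem stmt9 {m n : ℕ} (A B : Matrix (Fin m) (Fin n) ℂ) (Ad Bd : Matrix (Fin n) (Fin m) ℂ)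
    (hAd : IsMP A Ad) (hBd : IsMP B Bd) (h : diamondLE A B) :
    A * Ad = A * Bd * B * Ad ∧ Ad * A = Ad * B * Bd * A := by
  have key : ∀ {p q : ℕ} (A B : Matrix (Fin p) (Fin q) ℂ) (Bd : Matrix (Fin q) (Fin p) ℂ),
      B * Bd * B = B → mrange A ≤ mrange B → B * Bd * A = A := by
    intro p q A B Bd hB hr
    have : (B * Bd * A).mulVecLin = A.mulVecLin := by
      apply LinearMap.ext
      intro v
      obtain ⟨y, hy⟩ := hr ⟨v, rfl⟩
      simp only [mulVecLin_apply] at hy ⊢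
      rw [← Matrix.mulVec_mulVec, ← hy, Matrix.mulVec_mulVec, hB]
    exact Matrix.ext fun i j => by
      have := congrFun (congrArg DFunLike.coe this) (Pi.single j 1)
      simpa only [Matrix.mulVecLin_apply, Matrix.mulVec_single_one, Matrix.col_apply] using congrFun this i
  have h1 : B * Bd * A = A := key A B Bd hBd.1 h.1
  have hBH : Bᴴ * Bdᴴ * Bᴴ = Bᴴ := by
    rw [← conjTranspose_mul, ← conjTranspose_mul, ← Matrix.mul_assoc, hBd.1]
  have h2 : A * Bd * B = A := by
    have := key Aᴴ Bᴴ Bdᴴ hBH h.2.1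
    have := congrArg conjTranspose this
    simpa [conjTranspose_mul, Matrix.mul_assoc] using this
  constructor
  · calc A * Ad = (A * Bd * B) * Ad := by rw [h2]
      _ = A * Bd * B * Ad := by simp only [Matrix.mul_assoc]
  · calc Ad * A = Ad * (B * Bd * A) := by rw [h1]
      _ = Ad * B * Bd * A := by simp only [Matrix.mul_assoc]
end

section
/- A ≤⋄ B if and only if for every m×n matrix W one has A† = A† B A† + A† W A† − A† B B† W B† B A†. -/
open Matrix

/-- Entry of a product through a standard basis matrix. -/
lemma entry_helper {m n : ℕ} (M : Matrix (Fin n) (Fin m) ℂ) (N : Matrix (Fin n) (Fin m) ℂ)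
    (i : Fin m) (j : Fin n) (k : Fin n) (l : Fin m) :
    (M * Matrix.single i j (1:ℂ) * N) k l = M k i * N j l := by
  simp [Matrix.mul_apply, Matrix.single, Finset.sum_comm, ite_and, mul_ite]

/-- If `M * W * N = 0` for all `W`, then `M = 0` or `N = 0`. -/
lemma ann {m n : ℕ} (M N : Matrix (Fin n) (Fin m) ℂ)
    (h : ∀ W : Matrix (Fin m) (Fin n) ℂ, M * W * N = 0) : M = 0 ∨ N = 0 := by
  by_contra hc
  push_neg at hc
  obtain ⟨hM, hN⟩ := hc
  obtain ⟨k, i, hki⟩ : ∃ k i, M k i ≠ 0 := by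
    by_contra hz; push_neg at hz
    exact hM (Matrix.ext fun k i => by simpa using hz k i)
  obtain ⟨j, l, hjl⟩ : ∃ j l, N j l ≠ 0 := by
    by_contra hz; push_neg at hz
    exact hN (Matrix.ext fun j l => by simpa using hz j l)
  have h2 := congrFun (congrFun (h (Matrix.single i j (1:ℂ))) k) l
  rw [entry_helper] at h2
  rcases (show M k i = 0 ∨ N j l = 0 by simpa using h2) with h'|h'
  · exact hki h'
  · exact hjl h'

lemma mrange_mul_le {m n k : ℕ} (B : Matrix (Fin m) (Fin n) ℂ) (X : Matrix (Fin n) (Fin k) ℂ) :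
    mrange (B * X) ≤ mrange B := by
  rw [mrange, mrange, Matrix.mulVecLin_mul]
  exact LinearMap.range_comp_le_range _ _

lemma proj_of_mrange_le {m n k : ℕ}
    (A : Matrix (Fin m) (Fin k) ℂ) (B : Matrix (Fin m) (Fin n) ℂ) (Bd : Matrix (Fin n) (Fin m) ℂ)
    (hb : B * Bd * B = B) (h : mrange A ≤ mrange B) : B * Bd * A = A := by
  ext i j
  have hmem : A *ᵥ Pi.single j 1 ∈ mrange B :=
    h ⟨Pi.single j 1, by rw [Matrix.mulVecLin_apply]⟩
  obtain ⟨u, hu⟩ := hmem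
  have hu' : B *ᵥ u = A *ᵥ Pi.single j 1 := hu
  have key : (B * Bd * A) *ᵥ Pi.single j 1 = A *ᵥ Pi.single j 1 := by
    rw [← Matrix.mulVec_mulVec, ← hu', Matrix.mulVec_mulVec, hb, hu']
  have := congrFun key i
  simpa [Matrix.mulVec_single] using this

theorem stmt10 {m n : ℕ} (A B : Matrix (Fin m) (Fin n) ℂ) (Ad Bd : Matrix (Fin n) (Fin m) ℂ)
    (hAd : IsMP A Ad) (hBd : IsMP B Bd) :
    diamondLE A B ↔ ∀ W : Matrix (Fin m) (Fin n) ℂ,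
      Ad = Ad * B * Ad + Ad * W * Ad - Ad * B * Bd * W * Bd * B * Ad := by
  obtain ⟨a1, a2, a3, a4⟩ := hAd
  obtain ⟨b1, b2, b3, b4⟩ := hBd
  have e1 : Ad * Adᴴ * Aᴴ = Ad := by
    calc Ad * Adᴴ * Aᴴ = Ad * (A * Ad)ᴴ := by
          rw [Matrix.mul_assoc, ← Matrix.conjTranspose_mul]
      _ = Ad * (A * Ad) := by rw [a3]
      _ = Ad := by rw [← Matrix.mul_assoc, a2]
  have e2 : Aᴴ * Adᴴ * Ad = Ad := by
    calc Aᴴ * Adᴴ * Ad = (Ad * A)ᴴ * Ad := by rw [← Matrix.conjTranspose_mul]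
      _ = Ad * A * Ad := by rw [a4]
      _ = Ad := a2
  constructor
  · rintro ⟨h1, h2, h3⟩
    have hr1 : B * Bd * A = A := proj_of_mrange_le A B Bd b1 h1
    have hbH : Bᴴ * Bdᴴ * Bᴴ = Bᴴ := by
      have hb := congrArg conjTranspose b1
      simpa [Matrix.conjTranspose_mul, Matrix.mul_assoc] using hb
    have hr2' : Bᴴ * Bdᴴ * Aᴴ = Aᴴ := proj_of_mrange_le Aᴴ Bᴴ Bdᴴ hbH h2
    have hc1 : Aᴴ * (B * Bd) = Aᴴ := by
      have hh := congrArg conjTranspose hr1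
      rw [Matrix.conjTranspose_mul, b3] at hh
      exact hh
    have hr2 : A * (Bd * B) = A := by
      have hh := congrArg conjTranspose hr2'
      simpa [Matrix.conjTranspose_mul, Matrix.mul_assoc] using hh
    have hc2 : Bd * B * Aᴴ = Aᴴ := by
      have hh := congrArg conjTranspose hr2
      rw [Matrix.conjTranspose_mul, b4] at hh
      exact hh
    have F1 : Ad * B * Bd = Ad := by
      calc Ad * B * Bd = Ad * Adᴴ * Aᴴ * B * Bd := by rw [e1]
        _ = Ad * Adᴴ * (Aᴴ * (B * Bd)) := by simp only [Matrix.mul_assoc]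
        _ = Ad * Adᴴ * Aᴴ := by rw [hc1]
        _ = Ad := e1
    have F2 : Bd * B * Ad = Ad := by
      calc Bd * B * Ad = Bd * B * (Aᴴ * Adᴴ * Ad) := by rw [e2]
        _ = Bd * B * Aᴴ * (Adᴴ * Ad) := by simp only [Matrix.mul_assoc]
        _ = Aᴴ * (Adᴴ * Ad) := by rw [hc2]
        _ = Aᴴ * Adᴴ * Ad := by simp only [Matrix.mul_assoc]
        _ = Ad := e2
    have h3' : Aᴴ * B * Aᴴ = Aᴴ * A * Aᴴ := by
      have hh := congrArg conjTranspose h3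
      simpa [Matrix.conjTranspose_mul, Matrix.mul_assoc] using hh
    have F3 : Ad * B * Ad = Ad := by
      calc Ad * B * Ad = (Ad * Adᴴ * Aᴴ) * B * (Aᴴ * Adᴴ * Ad) := by rw [e1, e2]
        _ = Ad * Adᴴ * (Aᴴ * B * Aᴴ) * Adᴴ * Ad := by simp only [Matrix.mul_assoc]
        _ = Ad * Adᴴ * (Aᴴ * A * Aᴴ) * Adᴴ * Ad := by rw [h3']
        _ = (Ad * Adᴴ * Aᴴ) * A * (Aᴴ * Adᴴ * Ad) := by simp only [Matrix.mul_assoc]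
        _ = Ad * A * Ad := by rw [e1, e2]
        _ = Ad := a2
    intro W
    have hterm : Ad * B * Bd * W * Bd * B * Ad = Ad * W * Ad := by
      calc Ad * B * Bd * W * Bd * B * Ad = Ad * B * Bd * W * (Bd * B * Ad) := by
            simp only [Matrix.mul_assoc]
        _ = Ad * W * Ad := by rw [F1, F2]
    rw [F3, hterm, add_sub_cancel_right]
  · intro h
    have hABA : Ad * B * Ad = Ad := by
      have h0 := h 0
      simp only [Matrix.mul_zero, Matrix.zero_mul, add_zero, sub_zero] at h0
      exact h0.symm
    have key : ∀ W : Matrix (Fin m) (Fin n) ℂ, Ad * W * Ad = Ad * B * Bd * W * (Bd * B * Ad) := by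
      intro W
      have hW := h W
      rw [hABA] at hW
      have h2 : Ad * W * Ad - Ad * B * Bd * W * Bd * B * Ad = 0 := by
        have h3 : Ad + (Ad * W * Ad - Ad * B * Bd * W * Bd * B * Ad) = Ad + 0 := by
          rw [add_zero, ← add_sub_assoc]; exact hW.symm
        exact add_left_cancel h3
      have h4 : Ad * W * Ad = Ad * B * Bd * W * Bd * B * Ad := sub_eq_zero.mp h2
      rw [h4]
      simp only [Matrix.mul_assoc]
    by_cases hA0 : Ad = 0
    · have hA : A = 0 := by rw [← a1, hA0]; simp
      subst hA
      refine ⟨?_, ?_, by simp⟩ <;>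
        · simp only [mrange, Matrix.conjTranspose_zero, Matrix.mulVecLin_zero,
            LinearMap.range_zero]
          exact bot_le
    · have hQ : Bd * B * Ad = Ad := by
        have hz : ∀ W : Matrix (Fin m) (Fin n) ℂ, Ad * W * (Bd * B * Ad - Ad) = 0 := by
          intro W
          have k1 := key (W * (Bd * B))
          have r : Ad * B * Bd * (W * (Bd * B)) * (Bd * B * Ad)
              = Ad * B * Bd * W * (Bd * B * Bd * (B * Ad)) := by
            simp only [Matrix.mul_assoc]
          rw [r, b2] at k1
          have r2 : Ad * B * Bd * W * (Bd * (B * Ad)) = Ad * B * Bd * W * (Bd * B * Ad) := by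
            simp only [Matrix.mul_assoc]
          rw [r2, ← key W] at k1
          have k2 : Ad * W * (Bd * B * Ad) = Ad * W * Ad := by
            calc Ad * W * (Bd * B * Ad) = Ad * (W * (Bd * B)) * Ad := by
                  simp only [Matrix.mul_assoc]
              _ = Ad * W * Ad := k1
          rw [Matrix.mul_sub, k2, sub_self]
        rcases ann Ad (Bd * B * Ad - Ad) hz with h' | h'
        · exact absurd h' hA0
        · exact sub_eq_zero.mp h'
      have hP : Ad * B * Bd = Ad := by
        have hz : ∀ W : Matrix (Fin m) (Fin n) ℂ, (Ad * B * Bd - Ad) * W * Ad = 0 := by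
          intro W
          have k1 := key W
          rw [hQ] at k1
          have k1' : Ad * W * Ad = Ad * B * Bd * W * Ad := by
            rw [k1]
          rw [Matrix.sub_mul, Matrix.sub_mul, ← k1', sub_self]
        rcases ann (Ad * B * Bd - Ad) Ad hz with h' | h'
        · exact sub_eq_zero.mp h'
        · exact absurd h' hA0
      have hP' : Ad * (B * Bd) = Ad := by rw [← Matrix.mul_assoc]; exact hP
      have hAdH : B * Bd * Adᴴ = Adᴴ := by
        have hh := congrArg conjTranspose hP'
        rw [Matrix.conjTranspose_mul, b3] at hh
        exact hh
      have hAX : A = B * (Bd * (Adᴴ * (Aᴴ * A))) := by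
        calc A = A * Ad * A := a1.symm
          _ = (A * Ad)ᴴ * A := by rw [a3]
          _ = Adᴴ * Aᴴ * A := by rw [Matrix.conjTranspose_mul]
          _ = B * Bd * Adᴴ * (Aᴴ * A) := by rw [hAdH, Matrix.mul_assoc]
          _ = B * (Bd * (Adᴴ * (Aᴴ * A))) := by simp only [Matrix.mul_assoc]
      have hAHX : Aᴴ = Bᴴ * (Bdᴴ * (Ad * (A * Aᴴ))) := by
        calc Aᴴ = (A * Ad * A)ᴴ := by rw [a1]
          _ = (Ad * A)ᴴ * Aᴴ := by rw [Matrix.mul_assoc, Matrix.conjTranspose_mul]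
          _ = Ad * A * Aᴴ := by rw [a4]
          _ = Bd * B * Ad * (A * Aᴴ) := by rw [hQ, Matrix.mul_assoc]
          _ = (Bd * B)ᴴ * Ad * (A * Aᴴ) := by rw [b4]
          _ = Bᴴ * Bdᴴ * Ad * (A * Aᴴ) := by rw [Matrix.conjTranspose_mul]
          _ = Bᴴ * (Bdᴴ * (Ad * (A * Aᴴ))) := by simp only [Matrix.mul_assoc]
      have hd3 : A * Bᴴ * A = A * Aᴴ * A := by
        have hc : Adᴴ * Bᴴ * Adᴴ = Adᴴ := by
          have hh := congrArg conjTranspose hABA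
          simpa [Matrix.conjTranspose_mul, Matrix.mul_assoc] using hh
        have g1 : A * Aᴴ * Adᴴ = A := by
          calc A * Aᴴ * Adᴴ = A * (Ad * A)ᴴ := by
                rw [Matrix.mul_assoc, ← Matrix.conjTranspose_mul]
            _ = A * (Ad * A) := by rw [a4]
            _ = A := by rw [← Matrix.mul_assoc, a1]
        have g2 : Adᴴ * Aᴴ * A = A := by
          calc Adᴴ * Aᴴ * A = (A * Ad)ᴴ * A := by rw [← Matrix.conjTranspose_mul]
            _ = A * Ad * A := by rw [a3]
            _ = A := a1
        calc A * Bᴴ * A = (A * Aᴴ * Adᴴ) * Bᴴ * (Adᴴ * Aᴴ * A) := by rw [g1, g2]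
          _ = A * Aᴴ * (Adᴴ * Bᴴ * Adᴴ) * Aᴴ * A := by simp only [Matrix.mul_assoc]
          _ = A * Aᴴ * Adᴴ * Aᴴ * A := by rw [hc]
          _ = A * Aᴴ * A := by rw [g1]
      refine ⟨?_, ?_, hd3⟩
      · have hle := mrange_mul_le B (Bd * (Adᴴ * (Aᴴ * A)))
        rw [← hAX] at hle
        exact hle
      · have hle := mrange_mul_le Bᴴ (Bdᴴ * (Ad * (A * Aᴴ)))
        rw [← hAHX] at hle
        exact hle
end

section
/- If for some {1}-inverse A⁻ of A the matrix G = A⁻ A A† satisfies G A = G B and A G = B G, then A *≤ B (i.e., A* A = A* B and range(A) ⊆ range(B)). -/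
open Matrix

theorem stmt16 {m n : ℕ} (A B : Matrix (Fin m) (Fin n) ℂ) (Ad Am : Matrix (Fin n) (Fin m) ℂ)
    (hAd : IsMP A Ad) (hAm : A * Am * A = A)
    (hGA : (Am * A * Ad) * A = (Am * A * Ad) * B)
    (hAG : A * (Am * A * Ad) = B * (Am * A * Ad)) :
    Aᴴ * A = Aᴴ * B ∧ mrange A ≤ mrange B := by
  obtain ⟨h1, h2, h3, h4⟩ := hAd
  -- derive A = A * Ad * B
  have e1 := congrArg (fun X => A * X) hGA
  simp only [← Matrix.mul_assoc] at e1
  rw [hAm, h1] at e1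
  -- e1 : A = A * Ad * B
  have hAh : Aᴴ * (A * Ad) = Aᴴ := by
    rw [← h3, ← conjTranspose_mul, h1]
  -- derive A * Ad = B * Am * A * Ad
  simp only [← Matrix.mul_assoc] at hAG
  rw [hAm] at hAG
  -- hAG : A * Ad = B * Am * A * Ad
  constructor
  · calc Aᴴ * A = Aᴴ * (A * Ad * B) := congrArg (fun X => Aᴴ * X) e1
    _ = Aᴴ * (A * Ad) * B := (Matrix.mul_assoc Aᴴ (A * Ad) B).symm
    _ = Aᴴ * B := by rw [hAh]
  · have hfac : A = B * (Am * A * Ad * A) := by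
      calc A = A * Ad * A := h1.symm
      _ = B * Am * A * Ad * A := by rw [hAG]
      _ = B * (Am * A * Ad * A) := by simp only [Matrix.mul_assoc]
    have hmv : A.mulVecLin = (B * (Am * A * Ad * A)).mulVecLin := by rw [← hfac]
    rintro x ⟨y, hy⟩
    refine ⟨(Am * A * Ad * A).mulVecLin y, ?_⟩
    rw [← hy, hmv]
    simp [mulVecLin_mul]
end

section
/- If for some {1}-inverse A⁻ of A the matrix H = A† A A⁻ satisfies H A = H B and A H = B H, then A ≤* B (i.e., A A* = B A* and range(A*) ⊆ range(B*)). -/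
open Matrix

theorem stmt17 {m n : ℕ} (A B : Matrix (Fin m) (Fin n) ℂ) (Ad Am : Matrix (Fin n) (Fin m) ℂ)
    (hAd : IsMP A Ad) (hAm : A * Am * A = A)
    (hHA : (Ad * A * Am) * A = (Ad * A * Am) * B)
    (hAH : A * (Ad * A * Am) = B * (Ad * A * Am)) :
    A * Aᴴ = B * Aᴴ ∧ mrange Aᴴ ≤ mrange Bᴴ := by
  obtain ⟨h1, h2, h3, h4⟩ := hAd
  -- B * Ad * A = A
  have hB : B * Ad * A = A := by
    have := congrArg (fun X => X * A) hAH
    simp only [Matrix.mul_assoc] at this ⊢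
    rw [show A * (Am * A) = A by simpa [Matrix.mul_assoc] using hAm] at this
    rw [← this]
    simpa [Matrix.mul_assoc] using h1
  -- A * Am * B = A
  have hA : A * Am * B = A := by
    have this := congrArg (fun X => A * X) hHA
    simp only [Matrix.mul_assoc] at this
    have e1 : A * (Ad * (A * (Am * A))) = A * (Am * A) := by
      calc A * (Ad * (A * (Am * A))) = (A * Ad * A) * (Am * A) := by
            simp [Matrix.mul_assoc]
        _ = A * (Am * A) := by rw [h1]
    have e2 : A * (Ad * (A * (Am * B))) = A * (Am * B) := by
      calc A * (Ad * (A * (Am * B))) = (A * Ad * A) * (Am * B) := by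
            simp [Matrix.mul_assoc]
        _ = A * (Am * B) := by rw [h1]
    rw [e1, e2] at this
    calc A * Am * B = A * (Am * B) := by rw [Matrix.mul_assoc]
      _ = A * (Am * A) := this.symm
      _ = A := by simpa [Matrix.mul_assoc] using hAm
  have hAH' : Aᴴ = Ad * A * Aᴴ := by
    have h5 : (Ad * A * Aᴴ)ᴴ = A := by
      rw [conjTranspose_mul, conjTranspose_conjTranspose, h4]
      simpa [Matrix.mul_assoc] using h1
    calc Aᴴ = ((Ad * A * Aᴴ)ᴴ)ᴴ := by rw [h5]
      _ = Ad * A * Aᴴ := conjTranspose_conjTranspose _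
  constructor
  · calc A * Aᴴ = (B * Ad * A) * Aᴴ := by rw [hB]
      _ = B * (Ad * A * Aᴴ) := by simp [Matrix.mul_assoc]
      _ = B * Aᴴ := by rw [← hAH']
  · rintro x ⟨v, rfl⟩
    refine ⟨(A * Am)ᴴ.mulVec v, ?_⟩
    simp only [mulVecLin_apply, mulVec_mulVec]
    rw [← conjTranspose_mul, show A * Am * B = A from hA]
end

section
/- Let B be an m×n matrix of the form B = U · diag(D_b, 0) · V* with U, V unitary and D_b a b×b positive definite diagonal matrix. If A ≤⋄ B, then A = U · diag(T, 0) · V* for some b×b matrix T with T ≤⋄ D_b. -/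
open Matrix

private lemma sandwich_aux {n m : Type*} [Fintype n] [Fintype m] [DecidableEq n] [DecidableEq m]
    (U : Matrix n n ℂ) (V : Matrix m m ℂ) (F G : Matrix n m ℂ)
    (hUU : Uᴴ * U = 1) (hVV : Vᴴ * V = 1) :
    (U * F * Vᴴ) * (U * G * Vᴴ)ᴴ * (U * F * Vᴴ) = U * (F * Gᴴ * F) * Vᴴ := by
  have hBH : (U * G * Vᴴ)ᴴ = V * Gᴴ * Uᴴ := by
    simp [Matrix.conjTranspose_mul, Matrix.mul_assoc]
  rw [hBH]
  calc (U * F * Vᴴ) * (V * Gᴴ * Uᴴ) * (U * F * Vᴴ)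
      = U * (F * ((Vᴴ * V) * (Gᴴ * ((Uᴴ * U) * (F * Vᴴ))))) := by
        simp only [Matrix.mul_assoc]
    _ = U * (F * Gᴴ * F) * Vᴴ := by
        rw [hUU, hVV, Matrix.one_mul, Matrix.one_mul]
        simp only [Matrix.mul_assoc]

private lemma cancel_aux {n m : Type*} [Fintype n] [Fintype m] [DecidableEq n] [DecidableEq m]
    (U : Matrix n n ℂ) (V : Matrix m m ℂ) (X Y : Matrix n m ℂ)
    (hUU : Uᴴ * U = 1) (hVV : Vᴴ * V = 1)
    (h : U * X * Vᴴ = U * Y * Vᴴ) : X = Y := by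
  have e : ∀ Z : Matrix n m ℂ, Uᴴ * (U * Z * Vᴴ) * V = Z := by
    intro Z
    calc Uᴴ * (U * Z * Vᴴ) * V = (Uᴴ * U) * (Z * (Vᴴ * V)) := by
          simp only [Matrix.mul_assoc]
      _ = Z := by rw [hUU, hVV, Matrix.one_mul, Matrix.mul_one]
  rw [← e X, ← e Y, h]

theorem stmt18 {b p q : ℕ}
    (U : Matrix (Fin b ⊕ Fin p) (Fin b ⊕ Fin p) ℂ)
    (V : Matrix (Fin b ⊕ Fin q) (Fin b ⊕ Fin q) ℂ)
    (hU : U ∈ Matrix.unitaryGroup (Fin b ⊕ Fin p) ℂ)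
    (hV : V ∈ Matrix.unitaryGroup (Fin b ⊕ Fin q) ℂ)
    (D : Matrix (Fin b) (Fin b) ℂ) (d : Fin b → ℝ)
    (hDdiag : D = Matrix.diagonal (fun i => (d i : ℂ)))
    (hDpos : ∀ i, 0 < d i)
    (A B : Matrix (Fin b ⊕ Fin p) (Fin b ⊕ Fin q) ℂ)
    (hB : B = U * (Matrix.fromBlocks D 0 0 0 : Matrix (Fin b ⊕ Fin p) (Fin b ⊕ Fin q) ℂ) * Vᴴ)
    (h : diamondLE A B) :
    ∃ T : Matrix (Fin b) (Fin b) ℂ,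
      A = U * (Matrix.fromBlocks T 0 0 0 : Matrix (Fin b ⊕ Fin p) (Fin b ⊕ Fin q) ℂ) * Vᴴ ∧
      diamondLE T D := by
  obtain ⟨hr, hrs, hmid⟩ := h
  have hUU : Uᴴ * U = 1 := by
    simpa [Matrix.star_eq_conjTranspose] using hU.1
  have hUU' : U * Uᴴ = 1 := by
    simpa [Matrix.star_eq_conjTranspose] using hU.2
  have hVV : Vᴴ * V = 1 := by
    simpa [Matrix.star_eq_conjTranspose] using hV.1
  have hVV' : V * Vᴴ = 1 := by
    simpa [Matrix.star_eq_conjTranspose] using hV.2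
  set G : Matrix (Fin b ⊕ Fin p) (Fin b ⊕ Fin q) ℂ := Matrix.fromBlocks D 0 0 0 with hG
  set C : Matrix (Fin b ⊕ Fin p) (Fin b ⊕ Fin q) ℂ := Uᴴ * A * V with hCdef
  have hA : A = U * C * Vᴴ := by
    rw [hCdef]
    calc A = (U * Uᴴ) * A * (V * Vᴴ) := by rw [hUU', hVV']; simp
    _ = U * (Uᴴ * A * V) * Vᴴ := by simp only [Matrix.mul_assoc]
  -- bottom rows of C vanish
  have hrow : ∀ (i : Fin p) (j : Fin b ⊕ Fin q), C (Sum.inr i) j = 0 := by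
    intro i j
    obtain ⟨y, hy⟩ := hr (LinearMap.mem_range_self _ (V *ᵥ Pi.single j 1))
    have h0 : C (Sum.inr i) j = (C *ᵥ Pi.single j 1) (Sum.inr i) := by simp
    rw [h0, hCdef]
    have h1 : Uᴴ *ᵥ (A *ᵥ (V *ᵥ Pi.single j 1)) = (Uᴴ * A * V) *ᵥ Pi.single j 1 := by
      rw [Matrix.mulVec_mulVec, Matrix.mulVec_mulVec]
    rw [← h1]
    have h2 : A *ᵥ (V *ᵥ Pi.single j 1) = B *ᵥ y := by
      simpa [Matrix.mulVecLin_apply] using hy.symm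
    rw [h2, hB]
    have h3 : Uᴴ *ᵥ ((U * G * Vᴴ) *ᵥ y) = G *ᵥ (Vᴴ *ᵥ y) := by
      rw [Matrix.mulVec_mulVec, Matrix.mulVec_mulVec, ← Matrix.mul_assoc,
        ← Matrix.mul_assoc, hUU, Matrix.one_mul]
    rw [h3, hG, Matrix.fromBlocks_mulVec]
    simp
  -- right columns of C vanish
  have hcol : ∀ (i : Fin b ⊕ Fin p) (j : Fin q), C i (Sum.inr j) = 0 := by
    intro i j
    obtain ⟨y, hy⟩ := hrs (LinearMap.mem_range_self _ (U *ᵥ Pi.single i 1))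
    have hCH : Cᴴ = Vᴴ * Aᴴ * U := by
      rw [hCdef]; simp [Matrix.conjTranspose_mul, Matrix.mul_assoc]
    have key : Cᴴ (Sum.inr j) i = 0 := by
      have h0 : Cᴴ (Sum.inr j) i = (Cᴴ *ᵥ Pi.single i 1) (Sum.inr j) := by simp
      rw [h0, hCH]
      have h1 : Vᴴ *ᵥ (Aᴴ *ᵥ (U *ᵥ Pi.single i 1)) = (Vᴴ * Aᴴ * U) *ᵥ Pi.single i 1 := by
        rw [Matrix.mulVec_mulVec, Matrix.mulVec_mulVec]
      rw [← h1]
      have h2 : Aᴴ *ᵥ (U *ᵥ Pi.single i 1) = Bᴴ *ᵥ y := by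
        simpa [Matrix.mulVecLin_apply] using hy.symm
      rw [h2, hB]
      have hBH : (U * G * Vᴴ)ᴴ = V * Gᴴ * Uᴴ := by
        simp [Matrix.conjTranspose_mul, Matrix.mul_assoc]
      rw [hBH]
      have h3 : Vᴴ *ᵥ ((V * Gᴴ * Uᴴ) *ᵥ y) = Gᴴ *ᵥ (Uᴴ *ᵥ y) := by
        rw [Matrix.mulVec_mulVec, Matrix.mulVec_mulVec, ← Matrix.mul_assoc,
          ← Matrix.mul_assoc, hVV, Matrix.one_mul]
      rw [h3, hG]
      have hGH : (Matrix.fromBlocks D 0 0 0 : Matrix (Fin b ⊕ Fin p) (Fin b ⊕ Fin q) ℂ)ᴴ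
          = Matrix.fromBlocks Dᴴ 0 0 0 := by
        simp [Matrix.fromBlocks_conjTranspose]
      rw [hGH, Matrix.fromBlocks_mulVec]
      simp
    have : (starRingEnd ℂ) (C i (Sum.inr j)) = 0 := key
    exact star_eq_zero.mp this
  set T : Matrix (Fin b) (Fin b) ℂ := C.toBlocks₁₁ with hT
  have hCblocks : C = Matrix.fromBlocks T 0 0 0 := by
    ext i j
    rcases i with i | i <;> rcases j with j | j
    · simp [hT, Matrix.toBlocks₁₁]
    · simp [hcol (Sum.inl i) j]
    · simp [hrow i (Sum.inl j)]
    · simp [hrow i (Sum.inr j)]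
  have hF : A = U * (Matrix.fromBlocks T 0 0 0 :
      Matrix (Fin b ⊕ Fin p) (Fin b ⊕ Fin q) ℂ) * Vᴴ := by
    rw [← hCblocks]; exact hA
  have hDtop : mrange D = ⊤ := by
    rw [mrange, LinearMap.range_eq_top]
    intro v
    refine ⟨fun i => v i / (d i : ℂ), ?_⟩
    ext i
    have hd : (d i : ℂ) ≠ 0 := by exact_mod_cast (hDpos i).ne'
    simp [hDdiag, Matrix.mulVecLin_apply, Matrix.mulVec_diagonal, hd, mul_div_cancel₀]
  have hDH : Dᴴ = D := by
    rw [hDdiag, Matrix.diagonal_conjTranspose]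
    have : star (fun i => ((d i : ℂ))) = fun i => ((d i : ℂ)) := by
      funext i
      simp [Complex.conj_ofReal]
    rw [this]
  refine ⟨T, hF, ?_, ?_, ?_⟩
  · rw [hDtop]; exact le_top
  · rw [hDH, hDtop]; exact le_top
  · -- T * Dᴴ * T = T * Tᴴ * T
    set F : Matrix (Fin b ⊕ Fin p) (Fin b ⊕ Fin q) ℂ := Matrix.fromBlocks T 0 0 0 with hFdef
    have e1 : A * Bᴴ * A = U * (F * Gᴴ * F) * Vᴴ := by
      rw [hF, hB]; exact sandwich_aux U V F G hUU hVV
    have e2 : A * Aᴴ * A = U * (F * Fᴴ * F) * Vᴴ := by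
      rw [hF]; exact sandwich_aux U V F F hUU hVV
    have hFG : F * Gᴴ * F = F * Fᴴ * F := by
      refine cancel_aux U V (F * Gᴴ * F) (F * Fᴴ * F) hUU hVV ?_
      rw [← e1, ← e2, hmid]
    have hGH : Gᴴ = (Matrix.fromBlocks Dᴴ 0 0 0 :
        Matrix (Fin b ⊕ Fin q) (Fin b ⊕ Fin p) ℂ) := by
      rw [hG]; simp [Matrix.fromBlocks_conjTranspose]
    have hFH : Fᴴ = (Matrix.fromBlocks Tᴴ 0 0 0 :
        Matrix (Fin b ⊕ Fin q) (Fin b ⊕ Fin p) ℂ) := by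
      rw [hFdef]; simp [Matrix.fromBlocks_conjTranspose]
    rw [hFdef, hGH, hFH] at hFG
    simp only [Matrix.fromBlocks_multiply, Matrix.mul_zero, Matrix.zero_mul,
      add_zero, zero_add] at hFG
    have := congrArg Matrix.toBlocks₁₁ hFG
    simpa [Matrix.toBlocks_fromBlocks₁₁] using this
end
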